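/- Under Assumption *, suppose (μ,Λ) is a spectral pair with 0 ∈ Λ, and let ν = ν_{>1}. With Γ_0 = {0, N_1/M_1, ..., (M_1−1)N_1/M_1}, Γ = [0, N_1/M_1) ∩ ℚ = {γ_0 = 0, γ_1, γ_2, ...}, Γ_k = γ_k + Γ_0, P(γ) = {ω ∈ ℤ : γ + N_1ω ∈ Λ}, I^∞ = Γ_0 × Γ_1 × Γ_2 × ⋯, and Λ_i = ⋃_{k=0}^∞ (i_k/N_1 + P(i_k)) for i = (i_0,i_1,i_2,...) ∈ I^∞: every such Λ_i is either empty or an orthogonal set of ν. -/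

import Mathlib

open MeasureTheory Filter Topology Complex Polynomial

/-- The exponential function `e_l(x) = e^{-2πi l x}`. -/
noncomputable def expFun (l x : ℝ) : ℂ :=
  Complex.exp (((-2 * Real.pi * l * x : ℝ) : ℂ) * Complex.I)

/-- The Fourier transform `μ̂(ξ) = ∫ e^{-2πiξx} dμ(x)` of a measure on `ℝ`. -/
noncomputable def ft (μ : Measure ℝ) (ξ : ℝ) : ℂ := ∫ x, expFun ξ x ∂μ

/-- `Λ` is an orthogonal (orthonormal) set for `μ`: the exponentials `e_λ`, `λ ∈ Λ`, form an
orthonormal family in `L²(μ)`. -/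
def IsOrthoSet (μ : Measure ℝ) (Λ : Set ℝ) : Prop :=
  ∀ l₁ ∈ Λ, ∀ l₂ ∈ Λ,
    (∫ x, (starRingEnd ℂ) (expFun l₁ x) * expFun l₂ x ∂μ) = if l₁ = l₂ then 1 else 0

/-- `(μ, Λ)` is a spectral pair: the exponentials `{e_λ : λ ∈ Λ}` form an orthonormal family
which is maximal (total) in `L²(μ)`, i.e. an orthonormal basis of `L²(μ)`. -/
def IsSpectralPair (μ : Measure ℝ) (Λ : Set ℝ) : Prop :=
  IsOrthoSet μ Λ ∧
  ∀ f : ℝ → ℂ, MemLp f 2 μ →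
    (∀ l ∈ Λ, (∫ x, (starRingEnd ℂ) (expFun l x) * f x ∂μ) = 0) → f =ᵐ[μ] 0

/-- `μ` is a spectral measure: some countable `Λ ⊆ ℝ` is a spectrum of `μ`. -/
def IsSpectralMeasure (μ : Measure ℝ) : Prop :=
  ∃ Λ : Set ℝ, Λ.Countable ∧ IsSpectralPair μ Λ

/-- The uniform probability measure `δ_A` on a finite set `A ⊆ ℝ`. -/
noncomputable def uniformD (A : Finset ℝ) : Measure ℝ :=
  (A.card : ENNReal)⁻¹ • ∑ a ∈ A, Measure.dirac a

/-- The measure `δ_{c⁻¹ B}` for a finite set `B ⊆ ℤ` and a scaling factor `c`. -/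
noncomputable def scaledB (B : Finset ℤ) (c : ℝ) : Measure ℝ :=
  uniformD (B.image fun b : ℤ => (b : ℝ) / c)

/-- The finite convolutions `μ_k = δ_{N₁⁻¹B₁} ∗ δ_{(N₁N₂)⁻¹B₂} ∗ ⋯ ∗ δ_{(N₁⋯N_k)⁻¹B_k}`
(the sequences are indexed starting from `k = 1`; `μ_0 = δ_0`). -/
noncomputable def partialConv (N : ℕ → ℕ) (B : ℕ → Finset ℤ) : ℕ → Measure ℝ
  | 0 => Measure.dirac 0
  | k + 1 =>
      MeasureTheory.Measure.conv (partialConv N B k)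
        (scaledB (B (k + 1)) (∏ i ∈ Finset.Icc 1 (k + 1), (N i : ℝ)))

/-- `μ` is the infinite convolution of `{(N_k, B_k)}_{k=1}^∞`: it is a Borel probability
measure and the finite convolutions `μ_k` converge weakly to `μ`. -/
def IsInfiniteConv (N : ℕ → ℕ) (B : ℕ → Finset ℤ) (μ : Measure ℝ) : Prop :=
  IsProbabilityMeasure μ ∧
    ∀ f : BoundedContinuousFunction ℝ ℝ,
      Tendsto (fun k => ∫ x, f x ∂(partialConv N B k)) atTop (𝓝 (∫ x, f x ∂μ))

/-- `ν` is the tail infinite convolution `ν_{>k} = δ_{N_{k+1}⁻¹B_{k+1}} ∗ ⋯`. -/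
def IsNuGt (N : ℕ → ℕ) (B : ℕ → Finset ℤ) (k : ℕ) (ν : Measure ℝ) : Prop :=
  IsInfiniteConv (fun j => N (k + j)) (fun j => B (k + j)) ν

/-- A family of measures is tight. -/
def IsTightFamily {ι : Type*} (Φ : ι → Measure ℝ) : Prop :=
  ∀ ε : ENNReal, 0 < ε → ∃ K : Set ℝ, IsCompact K ∧ ∀ i, 1 - ε < Φ i K

/-- `B` is a complete residue system modulo `M`: each residue class modulo `M` contains
exactly one element of `B`. -/
def IsCRS (B : Finset ℤ) (M : ℕ) : Prop :=
  ∀ r : ZMod M, ∃! b : ℤ, b ∈ B ∧ ((b : ZMod M) = r)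

/-- `∑_{b ∈ B} x^{b - b⁎}` where `b⁎ = min B`, i.e. `x^{-b⁎} ∑_{b ∈ B} x^b`. -/
noncomputable def numerPoly (B : Finset ℤ) : Polynomial ℤ :=
  ∑ b ∈ B, Polynomial.X ^ (b - (B.min.untopD 0)).toNat

/-- `∑_{k=0}^{n-1} x^k`. -/
noncomputable def geomPoly (n : ℕ) : Polynomial ℤ :=
  ∑ k ∈ Finset.range n, Polynomial.X ^ k

/-- The character polynomial `f_B(x) = (∑_{b∈B} x^b)/(x^{b⁎} ∑_{k=0}^{#B-1} x^k)`,
obtained by dividing by the monic polynomial `∑_{k=0}^{#B-1} x^k`. -/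
noncomputable def charPoly (B : Finset ℤ) : Polynomial ℤ :=
  numerPoly B /ₘ geomPoly B.card

/-- `B` (a complete residue system modulo `M`) satisfies the uniform discrete zero
condition: `Z(f_B ∘ e^{-2πix}) ⊆ {j/M : j ∈ ℤ ∖ Mℤ}`. -/
def SatisfiesUDZ (B : Finset ℤ) (M : ℕ) : Prop :=
  {x : ℝ | Polynomial.aeval (expFun x 1) (charPoly B) = 0} ⊆
    {x : ℝ | ∃ j : ℤ, ¬ ((M : ℤ) ∣ j) ∧ x = (j : ℝ) / M}

/-- `M_B(ξ) = (1/#B) ∑_{b∈B} e^{-2πibξ}`, the Fourier transform of `δ_B`. -/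
noncomputable def MB (B : Finset ℤ) (ξ : ℝ) : ℂ :=
  (B.card : ℂ)⁻¹ * ∑ b ∈ B, expFun (b : ℝ) ξ

/-- `Q_{μ,Λ}(ξ) = ∑_{λ ∈ Λ} |μ̂(ξ+λ)|²`. -/
noncomputable def Qf (μ : Measure ℝ) (Λ : Set ℝ) (ξ : ℝ) : ℝ :=
  ∑' l : Λ, ‖ft μ (ξ + (l : ℝ))‖ ^ 2

/-- `P(γ) = {ω ∈ ℤ : γ + N₁ω ∈ Λ}`. -/
def Pset (Λ : Set ℝ) (N1 γ : ℝ) : Set ℤ := {ω : ℤ | γ + N1 * (ω : ℝ) ∈ Λ}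

/-- The translated set `γ/N₁ + P(γ)`, viewed as a subset of `ℝ`. -/
def PsetT (Λ : Set ℝ) (N1 γ : ℝ) : Set ℝ :=
  {x : ℝ | ∃ ω : ℤ, x = γ / N1 + (ω : ℝ) ∧ γ + N1 * (ω : ℝ) ∈ Λ}

/-- `Γ₀ = {0, N₁/M₁, 2N₁/M₁, …, (M₁-1)N₁/M₁}`. -/
def Gamma0 (N1 M1 : ℕ) : Set ℝ :=
  {x : ℝ | ∃ t : ℕ, t < M1 ∧ x = (t : ℝ) * ((N1 : ℝ) / (M1 : ℝ))}


section Auxiliary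

lemma expFun_mul_expFun (a b x : ℝ) : expFun a x * expFun b x = expFun (a + b) x := by
  rw [expFun, expFun, expFun, ← Complex.exp_add]
  congr 1
  push_cast
  ring

lemma conj_expFun (l x : ℝ) : (starRingEnd ℂ) (expFun l x) = expFun (-l) x := by
  rw [expFun, expFun, ← Complex.exp_conj]
  congr 1
  rw [map_mul, Complex.conj_I, Complex.conj_ofReal]
  push_cast
  ring

lemma norm_expFun (l x : ℝ) : ‖expFun l x‖ = 1 := by
  rw [expFun]
  exact Complex.norm_exp_ofReal_mul_I _

lemma expFun_add_right (l x y : ℝ) : expFun l (x + y) = expFun l x * expFun l y := by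
  rw [expFun, expFun, expFun, ← Complex.exp_add]
  congr 1
  push_cast
  ring

lemma continuous_expFun (l : ℝ) : Continuous (expFun l) := by
  unfold expFun
  fun_prop

lemma integrable_expFun (l : ℝ) (ρ : Measure ℝ) [IsFiniteMeasure ρ] :
    Integrable (expFun l) ρ := by
  refine Integrable.mono' (μ := ρ) (integrable_const (1 : ℝ))
    ((continuous_expFun l).aestronglyMeasurable) ?_
  exact Filter.Eventually.of_forall fun x => le_of_eq (norm_expFun l x)

instance uniformD_finite (A : Finset ℝ) : IsFiniteMeasure (uniformD A) := by
  constructor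
  rw [uniformD]
  rcases eq_or_ne A.card 0 with h | h
  · simp [h, Finset.card_eq_zero.mp h]
  · rw [Measure.smul_apply, smul_eq_mul]
    refine ENNReal.mul_lt_top ?_ ?_
    · exact (ENNReal.inv_lt_top.mpr (by exact_mod_cast Nat.pos_of_ne_zero h))
    · rw [Measure.finset_sum_apply]
      simp

lemma ft_conv (ρ₁ ρ₂ : Measure ℝ) [IsFiniteMeasure ρ₁] [IsFiniteMeasure ρ₂] (ξ : ℝ) :
    ft (ρ₁.conv ρ₂) ξ = ft ρ₁ ξ * ft ρ₂ ξ := by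
  rw [ft, Measure.conv,
    integral_map (by fun_prop) ((continuous_expFun ξ).aestronglyMeasurable)]
  simp_rw [expFun_add_right]
  rw [integral_prod_mul (f := expFun ξ) (g := expFun ξ)]
  rfl

lemma ft_uniformD (A : Finset ℝ) (ξ : ℝ) :
    ft (uniformD A) ξ = (A.card : ℂ)⁻¹ * ∑ a ∈ A, expFun ξ a := by
  rw [ft, uniformD, integral_smul_measure,
    integral_finset_sum_measure (fun a _ => integrable_expFun ξ _)]
  simp only [integral_dirac]
  rcases eq_or_ne A.card 0 with h | h
  · simp [h]
  · rw [ENNReal.toReal_inv, ENNReal.toReal_natCast, Complex.real_smul]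
    push_cast
    ring

lemma ft_scaledB (B : Finset ℤ) (c : ℝ) (hc : c ≠ 0) (ξ : ℝ) :
    ft (scaledB B c) ξ = MB B (ξ / c) := by
  rw [scaledB, ft_uniformD, MB]
  have hinj : Function.Injective (fun b : ℤ => (b : ℝ) / c) := by
    intro a b h
    simp only [div_eq_div_iff hc hc] at h
    exact_mod_cast mul_right_cancel₀ hc h
  rw [Finset.card_image_of_injective _ hinj, Finset.sum_image (fun a _ b _ h => hinj h)]
  congr 1
  refine Finset.sum_congr rfl fun b _ => ?_
  rw [expFun, expFun]
  congr 2
  push_cast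
  field_simp

instance scaledB_finite (B : Finset ℤ) (c : ℝ) : IsFiniteMeasure (scaledB B c) := by
  unfold scaledB; infer_instance

lemma partialConv_finite (N : ℕ → ℕ) (B : ℕ → Finset ℤ) (k : ℕ) :
    IsFiniteMeasure (partialConv N B k) := by
  induction k with
  | zero => rw [partialConv]; infer_instance
  | succ k ih => rw [partialConv]; exact @MeasureTheory.Measure.finite_of_finite_conv _ _ _ _ _ ih _

lemma ft_tendsto {N : ℕ → ℕ} {B : ℕ → Finset ℤ} {μ : Measure ℝ}
    (hμ : IsInfiniteConv N B μ) (ξ : ℝ) :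
    Tendsto (fun k => ft (partialConv N B k) ξ) atTop (𝓝 (ft μ ξ)) := by
  haveI := hμ.1
  have hbd_re : ∀ x : ℝ, ‖(expFun ξ x).re‖ ≤ 1 := fun x =>
    le_trans (by simpa [Real.norm_eq_abs] using Complex.abs_re_le_norm (expFun ξ x)) (le_of_eq (norm_expFun ξ x))
  have hbd_im : ∀ x : ℝ, ‖(expFun ξ x).im‖ ≤ 1 := fun x =>
    le_trans (by simpa [Real.norm_eq_abs] using Complex.abs_im_le_norm (expFun ξ x)) (le_of_eq (norm_expFun ξ x))
  set fre : BoundedContinuousFunction ℝ ℝ :=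
    BoundedContinuousFunction.ofNormedAddCommGroup (fun x => (expFun ξ x).re)
      (Complex.continuous_re.comp (continuous_expFun ξ)) 1 hbd_re with hfre
  set fim : BoundedContinuousFunction ℝ ℝ :=
    BoundedContinuousFunction.ofNormedAddCommGroup (fun x => (expFun ξ x).im)
      (Complex.continuous_im.comp (continuous_expFun ξ)) 1 hbd_im with hfim
  have hre := hμ.2 fre
  have him := hμ.2 fim
  have key : ∀ (ρ : Measure ℝ), IsFiniteMeasure ρ →
      ft ρ ξ = ↑(∫ x, fre x ∂ρ) + ↑(∫ x, fim x ∂ρ) * Complex.I := by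
    intro ρ hρ
    have hint := integrable_expFun ξ ρ
    have h1 : ∫ x, fre x ∂ρ = (∫ x, expFun ξ x ∂ρ).re := by
      simp only [hfre, BoundedContinuousFunction.coe_ofNormedAddCommGroup]
      exact (integral_re hint).trans rfl
    have h2 : ∫ x, fim x ∂ρ = (∫ x, expFun ξ x ∂ρ).im := by
      simp only [hfim, BoundedContinuousFunction.coe_ofNormedAddCommGroup]
      exact (integral_im hint).trans rfl
    rw [h1, h2, ft, Complex.re_add_im]
  have hμkey := key μ inferInstance
  have hkey : ∀ k, ft (partialConv N B k) ξ =
      ↑(∫ x, fre x ∂(partialConv N B k)) + ↑(∫ x, fim x ∂(partialConv N B k)) * Complex.I :=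
    fun k => key _ (partialConv_finite N B k)
  simp_rw [hkey, hμkey]
  exact ((Complex.continuous_ofReal.tendsto _).comp hre).add
    (((Complex.continuous_ofReal.tendsto _).comp him).mul_const Complex.I)

lemma prod_shift (N : ℕ → ℕ) (k : ℕ) :
    (∏ i ∈ Finset.Icc 1 (k + 2), (N i : ℝ)) =
      (N 1 : ℝ) * ∏ i ∈ Finset.Icc 1 (k + 1), (N (1 + i) : ℝ) := by
  have h1 : ∀ n : ℕ, (∏ i ∈ Finset.Icc 1 n, (N i : ℝ)) = ∏ j ∈ Finset.range n, (N (1 + j) : ℝ) := by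
    intro n
    rw [← Finset.Ico_add_one_right_eq_Icc, Finset.prod_Ico_eq_prod_range]
    simp
  rw [h1]
  have h2 : (∏ i ∈ Finset.Icc 1 (k + 1), (N (1 + i) : ℝ)) =
      ∏ j ∈ Finset.range (k + 1), (N (1 + (1 + j)) : ℝ) := by
    rw [← Finset.Ico_add_one_right_eq_Icc, Finset.prod_Ico_eq_prod_range]
    simp
  rw [h2, Finset.prod_range_succ']
  have : ∀ j, N (1 + (j + 1)) = N (1 + (1 + j)) := fun j => by ring_nf
  rw [mul_comm]
  congr 1
  exact Finset.prod_congr rfl fun j _ => by rw [this]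

lemma ft_partialConv_succ {N : ℕ → ℕ} {B : ℕ → Finset ℤ}
    (hN : ∀ i ≥ 1, N i ≠ 0) (k : ℕ) (ξ : ℝ) :
    ft (partialConv N B (k + 1)) ξ =
      MB (B 1) (ξ / (N 1 : ℝ)) *
        ft (partialConv (fun j => N (1 + j)) (fun j => B (1 + j)) k) (ξ / (N 1 : ℝ)) := by
  have hNpos : ∀ i ≥ 1, (0 : ℝ) < (N i : ℝ) := fun i hi => by
    exact_mod_cast Nat.pos_of_ne_zero (hN i hi)
  have hprod : ∀ n : ℕ, (∏ i ∈ Finset.Icc 1 n, (N i : ℝ)) ≠ 0 := by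
    intro n
    refine Finset.prod_ne_zero_iff.mpr fun i hi => ?_
    exact ne_of_gt (hNpos i (Finset.mem_Icc.mp hi).1)
  have hprod' : ∀ n : ℕ, (∏ i ∈ Finset.Icc 1 n, (N (1 + i) : ℝ)) ≠ 0 := by
    intro n
    refine Finset.prod_ne_zero_iff.mpr fun i hi => ?_
    exact ne_of_gt (hNpos (1 + i) (by omega))
  induction k with
  | zero =>
    rw [partialConv, partialConv]
    haveI := partialConv_finite N B 0
    rw [show partialConv N B 0 = Measure.dirac 0 from rfl, Measure.dirac_zero_conv]
    rw [ft_scaledB _ _ (hprod 1)]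
    have : (∏ i ∈ Finset.Icc 1 1, (N i : ℝ)) = (N 1 : ℝ) := by simp
    rw [this]
    rw [show ft (Measure.dirac 0) (ξ / (N 1 : ℝ)) = 1 by
      rw [ft, integral_dirac]; simp [expFun]]
    ring
  | succ k ih =>
    rw [show partialConv N B (k + 1 + 1) = MeasureTheory.Measure.conv (partialConv N B (k + 1))
        (scaledB (B (k + 2)) (∏ i ∈ Finset.Icc 1 (k + 2), (N i : ℝ))) from rfl]
    haveI := partialConv_finite N B (k + 1)
    rw [ft_conv, ih, ft_scaledB _ _ (hprod (k + 2))]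
    rw [show partialConv (fun j => N (1 + j)) (fun j => B (1 + j)) (k + 1) =
        MeasureTheory.Measure.conv (partialConv (fun j => N (1 + j)) (fun j => B (1 + j)) k)
          (scaledB (B (1 + (k + 1))) (∏ i ∈ Finset.Icc 1 (k + 1), (N (1 + i) : ℝ))) from rfl]
    haveI := partialConv_finite (fun j => N (1 + j)) (fun j => B (1 + j)) k
    rw [ft_conv, ft_scaledB _ _ (hprod' (k + 1))]
    rw [show (1 + (k + 1)) = k + 2 by omega]
    rw [prod_shift, ← div_div]
    ring

lemma ft_mu_eq {N : ℕ → ℕ} {B : ℕ → Finset ℤ} {μ ν : Measure ℝ}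
    (hN : ∀ i ≥ 1, N i ≠ 0)
    (hμ : IsInfiniteConv N B μ)
    (hν : IsInfiniteConv (fun j => N (1 + j)) (fun j => B (1 + j)) ν) (ξ : ℝ) :
    ft μ ((N 1 : ℝ) * ξ) = MB (B 1) ξ * ft ν ξ := by
  have hN1 : (N 1 : ℝ) ≠ 0 := by exact_mod_cast hN 1 le_rfl
  have h1 : Tendsto (fun k => ft (partialConv N B (k + 1)) ((N 1 : ℝ) * ξ)) atTop
      (𝓝 (ft μ ((N 1 : ℝ) * ξ))) :=
    (ft_tendsto hμ _).comp (tendsto_add_atTop_nat 1)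
  have heq : ∀ k, ft (partialConv N B (k + 1)) ((N 1 : ℝ) * ξ) =
      MB (B 1) ξ * ft (partialConv (fun j => N (1 + j)) (fun j => B (1 + j)) k) ξ := by
    intro k
    rw [ft_partialConv_succ hN k, mul_div_cancel_left₀ _ hN1]
  simp_rw [heq] at h1
  have h2 : Tendsto (fun k => MB (B 1) ξ *
      ft (partialConv (fun j => N (1 + j)) (fun j => B (1 + j)) k) ξ) atTop
      (𝓝 (MB (B 1) ξ * ft ν ξ)) := (ft_tendsto hν ξ).const_mul _
  exact tendsto_nhds_unique h1 h2

lemma card_of_CRS {B : Finset ℤ} {M : ℕ} (hM : 1 ≤ M) (hCRS : IsCRS B M) : B.card = M := by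
  haveI : NeZero M := ⟨by omega⟩
  have : B.card = (Finset.univ : Finset (ZMod M)).card := by
    refine Finset.card_bij (fun b _ => (b : ZMod M)) (fun _ _ => Finset.mem_univ _) ?_ ?_
    · intro a ha b hb h
      obtain ⟨c, _, hu⟩ := hCRS (a : ZMod M)
      exact (hu a ⟨ha, rfl⟩).trans (hu b ⟨hb, h.symm⟩).symm
    · intro r _
      obtain ⟨b, ⟨hb, hbr⟩, _⟩ := hCRS r
      exact ⟨b, hb, hbr⟩
  rw [this, Finset.card_univ, ZMod.card]

lemma geomPoly_dvd_sub_pow (M e : ℕ) (hM : 1 ≤ M) :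
    geomPoly M ∣ (Polynomial.X : Polynomial ℤ) ^ e - Polynomial.X ^ (e % M) := by
  have hdvd1 : geomPoly M ∣ (Polynomial.X : Polynomial ℤ) ^ M - 1 :=
    ⟨Polynomial.X - 1, (geom_sum_mul _ _).symm⟩
  have hdvd2 : geomPoly M ∣ ((Polynomial.X : Polynomial ℤ) ^ M) ^ (e / M) - 1 := by
    refine hdvd1.trans ?_
    simpa using sub_dvd_pow_sub_pow ((Polynomial.X : Polynomial ℤ) ^ M) 1 (e / M)
  have he : e = M * (e / M) + e % M := (Nat.div_add_mod e M).symm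
  calc geomPoly M ∣ (((Polynomial.X : Polynomial ℤ) ^ M) ^ (e / M) - 1) * Polynomial.X ^ (e % M) :=
        hdvd2.mul_right _
    _ = Polynomial.X ^ e - Polynomial.X ^ (e % M) := by
        rw [sub_mul, one_mul, ← pow_mul, ← pow_add, ← he]

lemma min_mem_le {B : Finset ℤ} {b : ℤ} (hb : b ∈ B) : B.min.untopD 0 ≤ b := by
  have hne : B.Nonempty := ⟨b, hb⟩
  rw [← Finset.coe_min' hne, WithTop.untopD_coe]
  exact Finset.min'_le B b hb

lemma cast_exponent {B : Finset ℤ} {M : ℕ} {b : ℤ} (hb : b ∈ B) :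
    (((b - B.min.untopD 0).toNat : ℤ) : ZMod M) = (b : ZMod M) - ((B.min.untopD 0 : ℤ) : ZMod M) := by
  rw [Int.toNat_of_nonneg (by linarith [min_mem_le hb])]
  push_cast
  ring

lemma geomPoly_dvd_numerPoly {B : Finset ℤ} {M : ℕ} (hM : 2 ≤ M) (hCRS : IsCRS B M) :
    geomPoly M ∣ numerPoly B := by
  haveI : NeZero M := ⟨by omega⟩
  have hMpos : 0 < M := by omega
  have key : ∑ b ∈ B, (Polynomial.X : Polynomial ℤ) ^ ((b - B.min.untopD 0).toNat % M)
      = geomPoly M := by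
    rw [geomPoly]
    refine Finset.sum_bij (fun b _ => (b - B.min.untopD 0).toNat % M)
      (fun b _ => Finset.mem_range.mpr (Nat.mod_lt _ hMpos)) ?_ ?_ ?_
    · intro a ha b hb h
      have h' : (a - B.min.untopD 0).toNat % M = (b - B.min.untopD 0).toNat % M := h
      have hcast : (a : ZMod M) = (b : ZMod M) := by
        have hna : (((a - B.min.untopD 0).toNat : ℕ) : ZMod M)
            = (((b - B.min.untopD 0).toNat : ℕ) : ZMod M) := by
          rw [← ZMod.natCast_mod, h', ZMod.natCast_mod]
        have h1 : (((a - B.min.untopD 0).toNat : ℤ) : ZMod M)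
            = (((b - B.min.untopD 0).toNat : ℤ) : ZMod M) := by
          rw [Int.cast_natCast, Int.cast_natCast]; exact hna
        rw [cast_exponent ha, cast_exponent hb] at h1
        linear_combination h1
      obtain ⟨c, _, hu⟩ := hCRS (a : ZMod M)
      exact (hu a ⟨ha, rfl⟩).trans (hu b ⟨hb, hcast.symm⟩).symm
    · intro r hr
      obtain ⟨b, ⟨hb, hbr⟩, _⟩ := hCRS (((B.min.untopD 0 : ℤ) : ZMod M) + (r : ZMod M))
      refine ⟨b, hb, ?_⟩
      have h1 : (((b - B.min.untopD 0).toNat % M : ℕ) : ZMod M) = ((r : ℕ) : ZMod M) := by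
        rw [ZMod.natCast_mod, ← Int.cast_natCast, cast_exponent hb, hbr]
        push_cast
        ring
      have h2 := congrArg ZMod.val h1
      rwa [ZMod.val_cast_of_lt (Nat.mod_lt _ hMpos),
        ZMod.val_cast_of_lt (Finset.mem_range.mp hr)] at h2
    · exact fun b _ => rfl
  have hsub : geomPoly M ∣ numerPoly B - geomPoly M := by
    nth_rewrite 2 [← key]
    rw [numerPoly, ← Finset.sum_sub_distrib]
    exact Finset.dvd_sum fun b _ => geomPoly_dvd_sub_pow M ((b - B.min.untopD 0).toNat) (by omega)
  have := dvd_add hsub (dvd_refl (geomPoly M))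
  simpa using this

lemma expFun_int (b : ℤ) (ξ : ℝ) : expFun (b : ℝ) ξ = (expFun ξ 1) ^ b := by
  rw [expFun, expFun, ← Complex.exp_int_mul]
  congr 1
  push_cast
  ring

lemma MB_eq_zero_imp {B : Finset ℤ} {M : ℕ} (hM : 2 ≤ M) (hCRS : IsCRS B M)
    (hUDZ : SatisfiesUDZ B M) {ξ : ℝ} (h : MB B ξ = 0) :
    ∃ j : ℤ, ¬ ((M : ℤ) ∣ j) ∧ ξ = (j : ℝ) / M := by
  have hcard : B.card = M := card_of_CRS (by omega) hCRS
  set z : ℂ := expFun ξ 1 with hz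
  have hz0 : z ≠ 0 := Complex.exp_ne_zero _
  have hsum : ∑ b ∈ B, z ^ (b : ℤ) = 0 := by
    have : (B.card : ℂ) ≠ 0 := by
      rw [hcard]; exact_mod_cast (by omega : (M : ℤ) ≠ 0)
    rw [MB] at h
    rcases mul_eq_zero.mp h with h' | h'
    · exact absurd h' (inv_ne_zero this)
    · simpa [expFun_int] using h'
  set m : ℤ := B.min.untopD 0 with hm
  have hnumer : Polynomial.aeval z (numerPoly B) = 0 := by
    rw [numerPoly, map_sum]
    have : ∀ b ∈ B, Polynomial.aeval z (Polynomial.X ^ (b - m).toNat : Polynomial ℤ)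
        = z ^ (b : ℤ) * (z ^ m)⁻¹ := by
      intro b hb
      rw [map_pow, Polynomial.aeval_X, ← zpow_natCast,
        Int.toNat_of_nonneg (by linarith [min_mem_le hb]), zpow_sub₀ hz0]
      rw [div_eq_mul_inv]
    rw [Finset.sum_congr rfl this, ← Finset.sum_mul, hsum, zero_mul]
  have hdvd := geomPoly_dvd_numerPoly hM hCRS
  have hmonic : (geomPoly M).Monic := by
    rw [geomPoly]; exact Polynomial.monic_geom_sum_X (by omega)
  have hfact : numerPoly B = geomPoly M * charPoly B := by
    have := Polynomial.modByMonic_add_div (numerPoly B) (geomPoly M)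
    rw [(Polynomial.modByMonic_eq_zero_iff_dvd hmonic).mpr hdvd, zero_add] at this
    rw [charPoly, hcard]
    exact this.symm
  have : Polynomial.aeval z (geomPoly M) * Polynomial.aeval z (charPoly B) = 0 := by
    rw [← map_mul, ← hfact, hnumer]
  rcases mul_eq_zero.mp this with hgeom | hchar
  · have hgs : ∑ k ∈ Finset.range M, z ^ k = 0 := by
      rw [geomPoly, map_sum] at hgeom
      simpa using hgeom
    have hz1 : z ≠ 1 := by
      intro h1
      rw [h1] at hgs
      simp at hgs
      omega
    have hzM : z ^ M = 1 := by
      have h0 : z ^ M - 1 = 0 := by rw [← geom_sum_mul z M, hgs, zero_mul]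
      linear_combination h0
    have hexp : Complex.exp ((M : ℂ) * (((-2 * Real.pi * ξ * 1 : ℝ) : ℂ) * Complex.I)) = 1 := by
      rw [Complex.exp_nat_mul]
      exact hzM
    obtain ⟨n, hn⟩ := Complex.exp_eq_one_iff.mp hexp
    have hreal : (M : ℝ) * (-2 * Real.pi * ξ * 1) = (n : ℝ) * (2 * Real.pi) := by
      have h1 : (((M : ℝ) * (-2 * Real.pi * ξ * 1) : ℝ) : ℂ) * Complex.I
          = (((n : ℝ) * (2 * Real.pi) : ℝ) : ℂ) * Complex.I := by
        push_cast
        push_cast at hn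
        linear_combination hn
      exact Complex.ofReal_inj.mp (mul_right_cancel₀ Complex.I_ne_zero h1)
    have hpi : (2 * Real.pi) ≠ 0 := by positivity
    have hMξ : (M : ℝ) * ξ = -(n : ℝ) := by
      refine mul_left_cancel₀ hpi ?_
      linear_combination -hreal
    have hM0 : (M : ℝ) ≠ 0 := by
      exact_mod_cast (by omega : M ≠ 0)
    refine ⟨-n, ?_, ?_⟩
    · rintro ⟨t, ht⟩
      apply hz1
      have hξ : ξ = (t : ℝ) := by
        have : (M : ℝ) * ξ = (M : ℝ) * (t : ℝ) := by
          rw [hMξ]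
          exact_mod_cast congrArg (fun x : ℤ => (x : ℝ)) (by linarith [ht] : (-n : ℤ) = M * t)
        exact mul_left_cancel₀ hM0 this
      rw [hz, expFun, hξ]
      have : ((-2 * Real.pi * (t : ℝ) * 1 : ℝ) : ℂ) * Complex.I
          = ((-t : ℤ) : ℂ) * (2 * (Real.pi : ℂ) * Complex.I) := by
        push_cast
        ring
      rw [this, Complex.exp_int_mul_two_pi_mul_I]
    · rw [eq_div_iff hM0]
      push_cast
      linarith [hMξ]
  · exact hUDZ hchar

lemma inner_eq_ft {ρ : Measure ℝ} (a b : ℝ) :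
    (∫ x, (starRingEnd ℂ) (expFun a x) * expFun b x ∂ρ) = ft ρ (b - a) := by
  rw [ft]
  congr 1
  funext x
  rw [conj_expFun, expFun_mul_expFun, neg_add_eq_sub]

end Auxiliary

theorem stmt15
    (N M : ℕ → ℕ) (B : ℕ → Finset ℤ) (μ : Measure ℝ) (ν : ℕ → Measure ℝ)
    (hM : ∀ k ≥ 1, 2 ≤ M k) (hMN : ∀ k ≥ 1, M k ≤ N k)
    (hCRS : ∀ k ≥ 1, IsCRS (B k) (M k))
    (hUDZ : ∀ k ≥ 1, SatisfiesUDZ (B k) (M k))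
    (hμ : IsInfiniteConv N B μ)
    (hν : ∀ k ≥ 1, IsNuGt N B k (ν k))
    (htight : IsTightFamily fun k => ν (k + 1))
    (Λ : Set ℝ) (hΛ : IsSpectralPair μ Λ) (h0 : (0 : ℝ) ∈ Λ)
    (g : ℕ → ℝ) (hg0 : g 0 = 0) (hginj : Function.Injective g)
    (hgrange : Set.range g =
      {x : ℝ | (∃ q : ℚ, x = (q : ℝ)) ∧ 0 ≤ x ∧ x < (N 1 : ℝ) / (M 1 : ℝ)}) :
    ∀ i : ℕ → ℝ, (∀ k, ∃ y ∈ Gamma0 (N 1) (M 1), i k = g k + y) →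
      (⋃ k, PsetT Λ (N 1) (i k)) = ∅ ∨
        IsOrthoSet (ν 1) (⋃ k, PsetT Λ (N 1) (i k)) := by
  intro i hi
  by_cases hE : (⋃ k, PsetT Λ (N 1) (i k)) = ∅
  · exact Or.inl hE
  right
  have hM1 : 2 ≤ M 1 := hM 1 le_rfl
  have hN1 : 2 ≤ N 1 := le_trans hM1 (hMN 1 le_rfl)
  have hN1R : (0 : ℝ) < (N 1 : ℝ) := by exact_mod_cast (by omega : 0 < N 1)
  have hM1R : (0 : ℝ) < (M 1 : ℝ) := by exact_mod_cast (by omega : 0 < M 1)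
  have hN1ne : (N 1 : ℝ) ≠ 0 := ne_of_gt hN1R
  have hM1ne : (M 1 : ℝ) ≠ 0 := ne_of_gt hM1R
  have hNnz : ∀ j ≥ 1, N j ≠ 0 := fun j hj => by
    have := le_trans (hM j hj) (hMN j hj); omega
  have hν1 : IsInfiniteConv (fun j => N (1 + j)) (fun j => B (1 + j)) (ν 1) := by
    have h := hν 1 le_rfl
    rw [IsNuGt] at h
    convert h using 2 <;> omega
  haveI : IsProbabilityMeasure (ν 1) := hν1.1
  have hgmem : ∀ k, 0 ≤ g k ∧ g k < (N 1 : ℝ) / (M 1 : ℝ) := by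
    intro k
    have : g k ∈ Set.range g := ⟨k, rfl⟩
    rw [hgrange] at this
    exact ⟨this.2.1, this.2.2⟩
  intro l₁ hl₁ l₂ hl₂
  rw [inner_eq_ft]
  obtain ⟨s₁, ⟨k₁, hk₁⟩, hm₁⟩ := hl₁
  obtain ⟨s₂, ⟨k₂, hk₂⟩, hm₂⟩ := hl₂
  rw [← hk₁] at hm₁
  rw [← hk₂] at hm₂
  obtain ⟨ω₁, hx₁, hΛ₁⟩ := hm₁
  obtain ⟨ω₂, hx₂, hΛ₂⟩ := hm₂
  by_cases hll : l₁ = l₂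
  · rw [if_pos hll, hll, sub_self, ft]
    simp [expFun]
  rw [if_neg hll]
  -- the corresponding spectrum points
  have hlam₁ : (N 1 : ℝ) * l₁ = i k₁ + (N 1 : ℝ) * (ω₁ : ℝ) := by
    rw [hx₁]; field_simp
  have hlam₂ : (N 1 : ℝ) * l₂ = i k₂ + (N 1 : ℝ) * (ω₂ : ℝ) := by
    rw [hx₂]; field_simp
  have hne : i k₁ + (N 1 : ℝ) * (ω₁ : ℝ) ≠ i k₂ + (N 1 : ℝ) * (ω₂ : ℝ) := by
    rw [← hlam₁, ← hlam₂]
    exact fun h => hll (mul_left_cancel₀ hN1ne h)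
  have horth := hΛ.1 _ hΛ₁ _ hΛ₂
  rw [if_neg hne, inner_eq_ft] at horth
  have hμft : ft μ ((N 1 : ℝ) * (l₂ - l₁)) = 0 := by
    have : (N 1 : ℝ) * (l₂ - l₁)
        = (i k₂ + (N 1 : ℝ) * (ω₂ : ℝ)) - (i k₁ + (N 1 : ℝ) * (ω₁ : ℝ)) := by
      rw [mul_sub, hlam₁, hlam₂]
    rw [this]
    exact horth
  have hkey := ft_mu_eq hNnz hμ hν1 (l₂ - l₁)
  rw [hμft] at hkey
  rcases mul_eq_zero.mp hkey.symm with hMB | hft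
  · -- MB vanishes : derive a contradiction
    exfalso
    obtain ⟨j, hjd, hjeq⟩ := MB_eq_zero_imp hM1 (hCRS 1 le_rfl) (hUDZ 1 le_rfl) hMB
    obtain ⟨y₁, ⟨t₁, ht₁, hy₁⟩, hik₁⟩ := hi k₁
    obtain ⟨y₂, ⟨t₂, ht₂, hy₂⟩, hik₂⟩ := hi k₂
    -- real form of l₂ - l₁
    have hl : (g k₂ - g k₁) / (N 1 : ℝ) + ((t₂ : ℝ) - (t₁ : ℝ)) / (M 1 : ℝ)
        + ((ω₂ : ℝ) - (ω₁ : ℝ)) = (j : ℝ) / (M 1 : ℝ) := by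
      rw [← hjeq, hx₁, hx₂, hik₁, hik₂, hy₁, hy₂]
      field_simp
      ring
    set j' : ℤ := j - ((t₂ : ℤ) - (t₁ : ℤ)) - (M 1 : ℤ) * (ω₂ - ω₁) with hj'def
    have hj'cast : (j' : ℝ) = (j : ℝ) - ((t₂ : ℝ) - (t₁ : ℝ)) - (M 1 : ℝ) * ((ω₂ : ℝ) - (ω₁ : ℝ)) := by
      rw [hj'def]; push_cast; ring
    have hj' : (g k₂ - g k₁) * (M 1 : ℝ) = (j' : ℝ) * (N 1 : ℝ) := by
      rw [hj'cast]
      have h := hl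
      field_simp at h
      refine mul_right_cancel₀ hM1ne ?_
      linear_combination (M 1 : ℝ) * h
    have hb₁ := hgmem k₁
    have hb₂ := hgmem k₂
    have habs : |(g k₂ - g k₁) * (M 1 : ℝ)| < (N 1 : ℝ) := by
      rw [abs_mul, abs_of_pos hM1R]
      have h1 : |g k₂ - g k₁| < (N 1 : ℝ) / (M 1 : ℝ) := by
        rw [abs_lt]
        constructor <;> [linarith [hb₁.1, hb₁.2, hb₂.1, hb₂.2]; linarith [hb₁.1, hb₁.2, hb₂.1, hb₂.2]]
      calc |g k₂ - g k₁| * (M 1 : ℝ) < ((N 1 : ℝ) / (M 1 : ℝ)) * (M 1 : ℝ) :=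
            mul_lt_mul_of_pos_right h1 hM1R
        _ = (N 1 : ℝ) := by field_simp
    have hj'0 : j' = 0 := by
      have h2 : |(j' : ℝ)| * (N 1 : ℝ) < 1 * (N 1 : ℝ) := by
        rw [one_mul]
        calc |(j' : ℝ)| * (N 1 : ℝ) = |(j' : ℝ) * (N 1 : ℝ)| := by
              rw [abs_mul, abs_of_pos hN1R]
          _ = |(g k₂ - g k₁) * (M 1 : ℝ)| := by rw [hj']
          _ < (N 1 : ℝ) := habs
      have h3 : |(j' : ℝ)| < 1 := lt_of_mul_lt_mul_right h2 (le_of_lt hN1R)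
      have h4 : |j'| < 1 := by exact_mod_cast (by rwa [← Int.cast_abs] at h3 : ((|j'| : ℤ) : ℝ) < 1)
      exact Int.abs_lt_one_iff.mp h4
    -- hence g k₂ = g k₁ and k₁ = k₂
    have hgeq : g k₂ = g k₁ := by
      have : (g k₂ - g k₁) * (M 1 : ℝ) = 0 := by rw [hj', hj'0]; simp
      have := mul_eq_zero.mp this
      rcases this with h | h
      · linarith [sub_eq_zero.mp h]
      · exact absurd h hM1ne
    have hkeq : k₂ = k₁ := hginj hgeq
    -- then l₂ - l₁ is an integer, contradicting M ∤ j
    have hint : l₂ - l₁ = ((ω₂ : ℝ) - (ω₁ : ℝ)) := by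
      rw [hx₁, hx₂, hkeq]
      ring
    have : (j : ℝ) = (M 1 : ℝ) * ((ω₂ : ℝ) - (ω₁ : ℝ)) := by
      rw [← hint, hjeq]
      field_simp
    have hjz : j = (M 1 : ℤ) * (ω₂ - ω₁) := by
      exact_mod_cast (by push_cast; linarith [this] : ((j : ℤ) : ℝ) = (((M 1 : ℤ) * (ω₂ - ω₁) : ℤ) : ℝ))
    exact hjd ⟨ω₂ - ω₁, hjz⟩
  · exact hft
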